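/- Let M be a locally right Garside monoid and M₁ a closed submonoid (closed under left lcm and under left divisor). For each x ∈ M there exists a unique pair (x', x₁) with x = x'x₁, x₁ ∈ M₁, and no non-trivial element of M₁ right-divides x'; namely x₁ is the M₁-tail of x and x' = x·x₁⁻¹. -/
import Mathlib


/-- `y` right-divides `x`, i.e. `x` is a left multiple of `y`. -/
def RDiv {M : Type*} [Monoid M] (x y : M) : Prop := ∃ z, x = z * y

/-- `z` is a left lcm of `a` and `b`: it is a common left multiple of `a` and `b`, and
every common left multiple of `a` and `b` is a left multiple of `z`. -/
def IsLeftLcm {M : Type*} [Monoid M] (z a b : M) : Prop :=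
  RDiv z a ∧ RDiv z b ∧ ∀ w, RDiv w a → RDiv w b → RDiv w z

/-- A monoid is locally right Garside if it is right cancellative, any two elements
admitting a common left multiple admit a left lcm, and, for every `x`, there is no
infinite strictly increasing chain of right divisors of `x`. -/
structure LocallyRightGarside (M : Type*) [Monoid M] : Prop where
  rightCancel : ∀ x y z : M, x * z = y * z → x = y
  lcm : ∀ a b : M, (∃ w, RDiv w a ∧ RDiv w b) → ∃ z, IsLeftLcm z a b
  noChain : ∀ x : M, ¬ ∃ f : ℕ → M,
      (∀ k, RDiv x (f k)) ∧ (∀ k, ∃ w, w ≠ 1 ∧ f (k + 1) = w * f k)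

/-- `t` is the `A`-tail of `x`: a right divisor of `x` lying in `A` which is maximal
with respect to right divisibility. -/
def IsTail {M : Type*} [Monoid M] (A : Set M) (x t : M) : Prop :=
  t ∈ A ∧ RDiv x t ∧ ∀ a ∈ A, RDiv x a → RDiv t a

/-- A submonoid is closed if it is closed under left lcm and under left divisor. -/
def ClosedSubmonoid {M : Type*} [Monoid M] (M₁ : Submonoid M) : Prop :=
  (∀ a ∈ M₁, ∀ b ∈ M₁, ∀ z : M, IsLeftLcm z a b → z ∈ M₁) ∧
  (∀ a ∈ M₁, ∀ y z : M, a = y * z → y ∈ M₁)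

/-- In a locally right Garside monoid with a closed submonoid `M₁`, every
`x` has a unique decomposition `x = x' * x₁` with `x₁ ∈ M₁` and no non-trivial element
of `M₁` right-dividing `x'`; moreover `x₁` is the `M₁`-tail of `x`. -/
theorem existsUnique_decomposition_closed_submonoid {M : Type*} [Monoid M]
    (h : LocallyRightGarside M) (M₁ : Submonoid M) (hc : ClosedSubmonoid M₁) (x : M) :
    ∃ p : M × M,
      ((x = p.1 * p.2 ∧ p.2 ∈ M₁ ∧ ∀ a ∈ M₁, RDiv p.1 a → a = 1) ∧
        IsTail (↑M₁) x p.2) ∧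
      ∀ q : M × M,
        (x = q.1 * q.2 ∧ q.2 ∈ M₁ ∧ ∀ a ∈ M₁, RDiv q.1 a → a = 1) → q = p := by
  classical
  -- In such a monoid, the only unit is 1.
  have hunit : ∀ a v : M, v * a = 1 → a = 1 := by
    intro a v hva
    by_contra ha
    apply h.noChain 1
    refine ⟨fun k => a ^ k, ?_, ?_⟩
    · intro k
      refine ⟨v ^ k, ?_⟩
      induction k with
      | zero => simp
      | succ n ih =>
        have : v ^ (n + 1) * a ^ (n + 1) = v ^ n * a ^ n := by
          rw [pow_succ, pow_succ', mul_assoc, ← mul_assoc v, hva, one_mul]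
        rw [this]; exact ih
    · intro k
      exact ⟨a, ha, pow_succ' a k⟩
  -- Existence of the tail.
  have htail : ∃ t, IsTail (↑M₁) x t := by
    by_contra hno
    push_neg at hno
    have step : ∀ t : M, t ∈ M₁ → RDiv x t →
        ∃ z, z ∈ M₁ ∧ RDiv x z ∧ ∃ w, w ≠ 1 ∧ z = w * t := by
      intro t ht hxt
      have hnt : ¬ IsTail (↑M₁) x t := hno t
      simp only [IsTail, SetLike.mem_coe] at hnt
      push_neg at hnt
      obtain ⟨a, ha, hxa, hta⟩ := hnt ht hxt
      obtain ⟨z, hzt, hza, hzmin⟩ := h.lcm t a ⟨x, hxt, hxa⟩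
      have hzM : z ∈ M₁ := hc.1 t ht a ha z ⟨hzt, hza, hzmin⟩
      have hxz : RDiv x z := hzmin x hxt hxa
      obtain ⟨w, hw⟩ := hzt
      refine ⟨z, hzM, hxz, w, ?_, hw⟩
      rintro rfl
      rw [one_mul] at hw
      exact hta (hw ▸ hza)
    choose g hg1 hg2 hg3 using step
    let F : ℕ → {t : M // t ∈ M₁ ∧ RDiv x t} := fun n =>
      Nat.rec ⟨1, M₁.one_mem, ⟨x, (mul_one x).symm⟩⟩
        (fun _ p => ⟨g p.1 p.2.1 p.2.2, hg1 _ _ _, hg2 _ _ _⟩) n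
    exact h.noChain x ⟨fun k => (F k).1, fun k => (F k).2.2,
      fun k => hg3 (F k).1 (F k).2.1 (F k).2.2⟩
  obtain ⟨t, htM, ⟨x', hx'⟩, hmax⟩ := htail
  refine ⟨(x', t), ⟨⟨hx', htM, ?_⟩, ⟨htM, ⟨x', hx'⟩, hmax⟩⟩, ?_⟩
  · rintro a ha ⟨u, hu⟩
    have hu' : x' = u * a := hu
    have hxat : RDiv x (a * t) := ⟨u, by rw [hx', hu', mul_assoc]⟩
    obtain ⟨v, hv⟩ := hmax (a * t) (M₁.mul_mem ha htM) hxat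
    rw [← mul_assoc] at hv
    have h1 : (1 : M) * t = (v * a) * t := by rw [one_mul]; exact hv
    exact hunit a v (h.rightCancel _ _ _ h1).symm
  · rintro ⟨q', q₁⟩ ⟨hq, hq₁, hqmax⟩
    obtain ⟨v, hv⟩ := hmax q₁ hq₁ ⟨q', hq⟩
    have hvM : v ∈ M₁ := hc.2 t htM v q₁ hv
    have heq : q' * q₁ = (x' * v) * q₁ := by rw [← hq, hx', hv, mul_assoc]
    have hq' : q' = x' * v := h.rightCancel _ _ _ heq
    have hv1 : v = 1 := hqmax v hvM ⟨x', hq'⟩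
    subst hv1
    rw [one_mul] at hv
    rw [mul_one] at hq'
    simp [hq', hv]
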